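/- Over a discrete valuation ring R with field of fractions K and maximal ideal P, the R-module M = (K/R) ⊕ (R/P) is H-supplemented. -/

import Mathlib

universe u v

/-- `N` is a small (superfluous) submodule of `M`. -/
def SmallSub (R : Type v) [Ring R] {M : Type u} [AddCommGroup M] [Module R M]
    (N : Submodule R M) : Prop :=
  ∀ X : Submodule R M, N ⊔ X = ⊤ → X = ⊤

/-- `D` is a direct summand of `M`. -/
def IsDirectSummand (R : Type v) [Ring R] {M : Type u} [AddCommGroup M] [Module R M]
    (D : Submodule R M) : Prop :=
  ∃ D' : Submodule R M, IsCompl D D'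

/-- `M` is H-supplemented: for every submodule `X` there is a direct summand `D`
with `(X+D)/D ≪ M/D` and `(X+D)/X ≪ M/X`. -/
def HSupplemented (R : Type v) [Ring R] (M : Type u) [AddCommGroup M] [Module R M] : Prop :=
  ∀ X : Submodule R M, ∃ D : Submodule R M, IsDirectSummand R D ∧
    SmallSub R ((X ⊔ D).map D.mkQ) ∧ SmallSub R ((X ⊔ D).map X.mkQ)

/-- Condition (D3). -/
def CondD3 (R : Type v) [Ring R] (M : Type u) [AddCommGroup M] [Module R M] : Prop :=
  ∀ K L : Submodule R M, IsDirectSummand R K → IsDirectSummand R L → K ⊔ L = ⊤ →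
    IsDirectSummand R (K ⊓ L)

section Aux

variable {R : Type v} [CommRing R]

lemma smallSub_bot {M : Type u} [AddCommGroup M] [Module R M] :
    SmallSub R (⊥ : Submodule R M) := fun X hX => by simpa using hX

lemma smallSub_of_subsingleton {M : Type u} [AddCommGroup M] [Module R M]
    [Subsingleton M] (S : Submodule R M) : SmallSub R S := by
  intro Y _
  rw [eq_top_iff]
  intro z _
  rw [Subsingleton.elim z 0]
  exact Y.zero_mem

lemma smallSub_map {M : Type u} {T : Type u} [AddCommGroup M] [Module R M]
    [AddCommGroup T] [Module R T] (f : M →ₗ[R] T) (hf : Function.Surjective f)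
    {S : Submodule R M} (hS : SmallSub R S) : SmallSub R (S.map f) := by
  intro Y hY
  have h1 : S ⊔ Y.comap f = ⊤ := by
    rw [eq_top_iff]
    intro m _
    have hm : f m ∈ S.map f ⊔ Y := hY ▸ Submodule.mem_top
    obtain ⟨s, hs, y, hy, hsy⟩ := Submodule.mem_sup.mp hm
    obtain ⟨s', hs', rfl⟩ := hs
    have hmem : m - s' ∈ Y.comap f := by
      rw [Submodule.mem_comap, map_sub]
      have : f m - f s' = y := by rw [← hsy]; abel
      rw [this]; exact hy
    have : m = s' + (m - s') := by abel
    rw [this]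
    exact Submodule.add_mem _ (Submodule.mem_sup_left hs')
      (Submodule.mem_sup_right hmem)
  have h2 : Y.comap f = ⊤ := hS _ h1
  rw [eq_top_iff]
  intro t _
  obtain ⟨m, rfl⟩ := hf t
  have : m ∈ Y.comap f := h2 ▸ Submodule.mem_top
  exact this

lemma divPowAux {T : Type u} [AddCommGroup T] [Module R T] {π : R}
    (hdiv : ∀ t : T, ∃ t', π • t' = t) (n : ℕ) (t : T) : ∃ t', π ^ n • t' = t := by
  induction n generalizing t with
  | zero => exact ⟨t, by simp⟩
  | succ n ih =>
    obtain ⟨t₁, ht₁⟩ := ih t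
    obtain ⟨t₂, ht₂⟩ := hdiv t₁
    exact ⟨t₂, by rw [pow_succ, mul_smul, ht₂, ht₁]⟩

lemma smallSub_of_div_bounded {T : Type u} [AddCommGroup T] [Module R T]
    (π : R) (n : ℕ) (hdiv : ∀ t : T, ∃ t', π • t' = t)
    (S : Submodule R T) (hb : ∀ s ∈ S, π ^ n • s = 0) : SmallSub R S := by
  intro Y hY
  rw [eq_top_iff]
  intro t _
  obtain ⟨t', ht'⟩ := divPowAux hdiv n t
  have hmem : t' ∈ S ⊔ Y := hY ▸ Submodule.mem_top
  obtain ⟨s, hs, y, hy, hsy⟩ := Submodule.mem_sup.mp hmem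
  have : t = π ^ n • y := by
    rw [← ht', ← hsy, smul_add, hb s hs, zero_add]
  rw [this]
  exact Y.smul_mem _ hy

variable [IsDomain R] [IsDiscreteValuationRing R]
variable {K : Type v} [Field K] [Algebra R K] [IsFractionRing R K]

lemma kr_div {ϖ : R} (hϖ : Irreducible ϖ)
    (x : K ⧸ LinearMap.range (Algebra.linearMap R K)) : ∃ y, ϖ • y = x := by
  obtain ⟨u, rfl⟩ := Submodule.Quotient.mk_surjective _ x
  refine ⟨Submodule.Quotient.mk ((algebraMap R K ϖ)⁻¹ * u), ?_⟩
  rw [← Submodule.Quotient.mk_smul]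
  congr 1
  rw [Algebra.smul_def, ← mul_assoc, mul_inv_cancel₀, one_mul]
  exact (map_ne_zero_iff _ (IsFractionRing.injective R K)).mpr hϖ.ne_zero

lemma kr_tor {ϖ : R} (hϖ : Irreducible ϖ)
    (x : K ⧸ LinearMap.range (Algebra.linearMap R K)) : ∃ n : ℕ, ϖ ^ n • x = 0 := by
  obtain ⟨u, rfl⟩ := Submodule.Quotient.mk_surjective _ x
  obtain ⟨⟨a, b⟩, hab⟩ := IsLocalization.surj (nonZeroDivisors R) u
  have hb0 : (b : R) ≠ 0 := nonZeroDivisors.coe_ne_zero b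
  obtain ⟨n, w, hw⟩ := IsDiscreteValuationRing.eq_unit_mul_pow_irreducible hb0 hϖ
  refine ⟨n, ?_⟩
  rw [← Submodule.Quotient.mk_smul, Submodule.Quotient.mk_eq_zero]
  refine ⟨(↑w⁻¹ : R) * a, ?_⟩
  have hbk : algebraMap R K (b : R) = algebraMap R K (w : R) * (algebraMap R K ϖ) ^ n := by
    rw [← map_pow, ← map_mul, ← hw]
  have hwu : algebraMap R K (↑w⁻¹ : R) * algebraMap R K (w : R) = 1 := by
    rw [← map_mul, Units.inv_mul, map_one]
  calc Algebra.linearMap R K ((↑w⁻¹ : R) * a)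
      = algebraMap R K (↑w⁻¹ : R) * algebraMap R K a := by
        simp [Algebra.linearMap_apply, map_mul]
    _ = algebraMap R K (↑w⁻¹ : R) * (u * algebraMap R K (b : R)) := by rw [hab]
    _ = (algebraMap R K (↑w⁻¹ : R) * algebraMap R K (w : R)) *
          ((algebraMap R K ϖ) ^ n * u) := by rw [hbk]; ring
    _ = (algebraMap R K ϖ) ^ n * u := by rw [hwu, one_mul]
    _ = ϖ ^ n • u := by rw [Algebra.smul_def, map_pow]

lemma kr_cyc {ϖ : R} (hϖ : Irreducible ϖ) (m : ℕ)
    (x y : K ⧸ LinearMap.range (Algebra.linearMap R K))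
    (h1 : ϖ ^ (m + 1) • x = 0) (h2 : ϖ ^ m • x ≠ 0) (h3 : ϖ ^ (m + 1) • y = 0) :
    ∃ r : R, r • x = y := by
  have hϖK : algebraMap R K ϖ ≠ 0 :=
    (map_ne_zero_iff _ (IsFractionRing.injective R K)).mpr hϖ.ne_zero
  obtain ⟨u, rfl⟩ := Submodule.Quotient.mk_surjective _ x
  obtain ⟨v, rfl⟩ := Submodule.Quotient.mk_surjective _ y
  rw [← Submodule.Quotient.mk_smul, Submodule.Quotient.mk_eq_zero] at h1 h3
  obtain ⟨s, hs⟩ := h1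
  obtain ⟨t, ht⟩ := h3
  rw [Algebra.linearMap_apply] at hs ht
  rw [Algebra.smul_def, map_pow] at hs ht
  have hs_unit : IsUnit s := by
    by_contra hns
    have hmem : s ∈ IsLocalRing.maximalIdeal R := by
      rw [IsLocalRing.mem_maximalIdeal]
      exact hns
    rw [hϖ.maximalIdeal_eq, Ideal.mem_span_singleton'] at hmem
    obtain ⟨s', hs'⟩ := hmem
    apply h2
    rw [← Submodule.Quotient.mk_smul, Submodule.Quotient.mk_eq_zero]
    refine ⟨s', ?_⟩
    rw [Algebra.linearMap_apply, Algebra.smul_def, map_pow]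
    apply mul_left_cancel₀ hϖK
    have : algebraMap R K ϖ * algebraMap R K s' = algebraMap R K s := by
      rw [← map_mul, mul_comm, hs']
    rw [← mul_assoc, ← pow_succ', this, hs]
  obtain ⟨w, rfl⟩ := hs_unit
  refine ⟨t * (↑w⁻¹ : R), ?_⟩
  rw [← Submodule.Quotient.mk_smul]
  congr 1
  have hw0 : algebraMap R K (w : R) ≠ 0 := by
    intro h
    have := (map_ne_zero_iff _ (IsFractionRing.injective R K)).mpr w.ne_zero
    exact this h
  apply mul_left_cancel₀ hw0
  have hinv : algebraMap R K (↑w⁻¹ : R) * algebraMap R K (w : R) = 1 := by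
    rw [← map_mul, Units.inv_mul, map_one]
  rw [Algebra.smul_def, map_mul]
  calc algebraMap R K (w : R) * (algebraMap R K t * algebraMap R K (↑w⁻¹ : R) * u)
      = (algebraMap R K (↑w⁻¹ : R) * algebraMap R K (w : R)) * (algebraMap R K t * u) := by
        ring
    _ = algebraMap R K t * u := by rw [hinv, one_mul]
    _ = (algebraMap R K ϖ) ^ (m + 1) * v * u := by rw [ht]
    _ = ((algebraMap R K ϖ) ^ (m + 1) * u) * v := by ring
    _ = algebraMap R K (w : R) * v := by rw [← hs]

lemma kr_bounded_or_top {ϖ : R} (hϖ : Irreducible ϖ)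
    (N : Submodule R (K ⧸ LinearMap.range (Algebra.linearMap R K))) :
    (∃ n : ℕ, ∀ q ∈ N, ϖ ^ n • q = 0) ∨ N = ⊤ := by
  classical
  by_cases hb : ∃ n : ℕ, ∀ q ∈ N, ϖ ^ n • q = 0
  · exact Or.inl hb
  right
  push_neg at hb
  rw [eq_top_iff]
  rintro y -
  obtain ⟨m, hm⟩ := kr_tor hϖ y
  obtain ⟨x, hxN, hx⟩ := hb m
  have hex : ∃ n : ℕ, ϖ ^ n • x = 0 := kr_tor hϖ x
  have hk0 : ϖ ^ (Nat.find hex) • x = 0 := Nat.find_spec hex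
  set k := Nat.find hex with hkdef
  have hmk : m < k := by
    by_contra h
    push_neg at h
    apply hx
    have : m = (m - k) + k := by omega
    rw [this, pow_add, mul_smul, hk0, smul_zero]
  have hk1 : ϖ ^ (k - 1) • x ≠ 0 := Nat.find_min hex (by omega)
  have hkk : k - 1 + 1 = k := by omega
  have hyk : ϖ ^ (k - 1 + 1) • y = 0 := by
    have h5 : k - 1 + 1 = (k - 1 + 1 - m) + m := by omega
    rw [h5, pow_add, mul_smul, hm, smul_zero]
  have hxk : ϖ ^ (k - 1 + 1) • x = 0 := by rw [hkk]; exact hk0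
  obtain ⟨r, hr⟩ := kr_cyc hϖ (k - 1) x y hxk hk1 hyk
  rw [← hr]
  exact N.smul_mem r hxN

end Aux

theorem stmt17 {R : Type v} [CommRing R] [IsDomain R] [IsDiscreteValuationRing R]
    (K : Type v) [Field K] [Algebra R K] [IsFractionRing R K] :
    HSupplemented R
      ((K ⧸ LinearMap.range (Algebra.linearMap R K)) ×
        (R ⧸ (IsLocalRing.maximalIdeal R))) := by
  classical
  obtain ⟨ϖ, hϖ⟩ := IsDiscreteValuationRing.exists_irreducible R
  set Q := K ⧸ LinearMap.range (Algebra.linearMap R K) with hQdef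
  set Bq := R ⧸ (IsLocalRing.maximalIdeal R) with hBqdef
  set A : Submodule R (Q × Bq) := LinearMap.range (LinearMap.inl R Q Bq) with hA
  set B : Submodule R (Q × Bq) := LinearMap.range (LinearMap.inr R Q Bq) with hB
  -- basic facts
  have hϖP : ϖ ∈ IsLocalRing.maximalIdeal R := by
    rw [IsLocalRing.mem_maximalIdeal]
    exact hϖ.not_isUnit
  have hBqkill : ∀ c : Bq, ϖ • c = 0 := by
    intro c
    obtain ⟨r, rfl⟩ := Submodule.Quotient.mk_surjective _ c
    rw [← Submodule.Quotient.mk_smul, Submodule.Quotient.mk_eq_zero]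
    exact Ideal.mul_mem_right r _ hϖP
  have hspan : ∀ c : Bq, c ≠ 0 → ∀ c' : Bq, ∃ r : R, r • c = c' := by
    intro c hc c'
    obtain ⟨a, rfl⟩ := Submodule.Quotient.mk_surjective _ c
    obtain ⟨b, rfl⟩ := Submodule.Quotient.mk_surjective _ c'
    have ha : IsUnit a := by
      by_contra hna
      apply hc
      rw [Submodule.Quotient.mk_eq_zero]
      rw [IsLocalRing.mem_maximalIdeal]
      exact hna
    obtain ⟨w, rfl⟩ := ha
    refine ⟨b * (↑w⁻¹ : R), ?_⟩
    rw [← Submodule.Quotient.mk_smul]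
    congr 1
    rw [smul_eq_mul, mul_assoc, Units.inv_mul, mul_one]
  have memA : ∀ p : Q × Bq, p ∈ A ↔ p.2 = 0 := by
    intro p
    rw [hA, LinearMap.range_inl, LinearMap.mem_ker, LinearMap.snd_apply]
  have memB : ∀ p : Q × Bq, p ∈ B ↔ p.1 = 0 := by
    intro p
    rw [hB, LinearMap.range_inr, LinearMap.mem_ker, LinearMap.fst_apply]
  -- divisibility of quotients of M covering the Bq direction
  have hquotdiv : ∀ W : Submodule R (Q × Bq), (∀ c : Bq, ∃ qc : Q, (qc, c) ∈ W) →
      ∀ t : (Q × Bq) ⧸ W, ∃ t', ϖ • t' = t := by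
    intro W hW t
    obtain ⟨⟨q, c⟩, rfl⟩ := Submodule.mkQ_surjective W t
    obtain ⟨qc, hqc⟩ := hW c
    obtain ⟨q', hq'⟩ := kr_div hϖ (q - qc)
    refine ⟨W.mkQ (q', 0), ?_⟩
    rw [← map_smul]
    have hsm : ϖ • ((q', 0) : Q × Bq) = (q - qc, 0) := by
      rw [Prod.smul_mk, hq', smul_zero]
    rw [hsm]
    rw [Submodule.mkQ_apply, Submodule.mkQ_apply, Submodule.Quotient.eq]
    have : ((q - qc, 0) : Q × Bq) - (q, c) = -(qc, c) := by
      ext <;> simp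
    rw [this]
    exact W.neg_mem hqc
  intro X
  by_cases hAX : A ≤ X
  · by_cases hXA : X ≤ A
    · -- X = A, take D = X
      have hXeq : X = A := le_antisymm hXA hAX
      refine ⟨X, ⟨B, by rw [hXeq, hA, hB]; exact LinearMap.isCompl_range_inl_inr⟩, ?_, ?_⟩ <;>
      · rw [sup_idem]
        have hmap : X.map X.mkQ = ⊥ := by
          rw [eq_bot_iff]
          rintro z ⟨x, hx, rfl⟩
          rw [Submodule.mem_bot, Submodule.mkQ_apply, Submodule.Quotient.mk_eq_zero]
          exact hx
        rw [hmap]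
        exact smallSub_bot
    · -- A ≤ X, X ⊄ A ⟹ X = ⊤
      have hXtop : X = ⊤ := by
        rw [eq_top_iff]
        rintro ⟨q₀, c₀⟩ -
        obtain ⟨⟨q, c⟩, hqX, hqA⟩ := SetLike.not_le_iff_exists.mp hXA
        have hc : c ≠ 0 := fun h => hqA ((memA _).mpr h)
        obtain ⟨r, hr⟩ := hspan c hc c₀
        have h1 : ((q₀ - r • q, 0) : Q × Bq) ∈ X := hAX ((memA _).mpr rfl)
        have h2 : ((q₀, c₀) : Q × Bq) = (q₀ - r • q, 0) + r • (q, c) := by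
          rw [Prod.smul_mk]
          ext
          · simp
          · simp [hr]
        rw [h2]
        exact X.add_mem h1 (X.smul_mem r hqX)
      subst hXtop
      refine ⟨⊤, ⟨⊥, isCompl_top_bot⟩, ?_, ?_⟩ <;>
      · have hsub : Subsingleton ((Q × Bq) ⧸ (⊤ : Submodule R (Q × Bq))) :=
          Submodule.Quotient.subsingleton_iff.mpr rfl
        exact smallSub_of_subsingleton _
  · -- ¬ A ≤ X : the first-component trace of X is bounded
    obtain ⟨n, hn⟩ : ∃ n : ℕ, ∀ q ∈ Submodule.comap (LinearMap.inl R Q Bq) X, ϖ ^ n • q = 0 := by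
      rcases kr_bounded_or_top hϖ (Submodule.comap (LinearMap.inl R Q Bq) X) with h | h
      · exact h
      · exfalso
        apply hAX
        rw [hA]
        rintro p ⟨q, rfl⟩
        have hq : q ∈ Submodule.comap (LinearMap.inl R Q Bq) X := h ▸ Submodule.mem_top
        exact hq
    have hnmem : ∀ q : Q, (q, (0 : Bq)) ∈ X → ϖ ^ n • q = 0 := by
      intro q hq
      apply hn
      rw [Submodule.mem_comap, LinearMap.inl_apply]
      exact hq
    by_cases hXA : X ≤ A
    · -- X is bounded and contained in A, hence small; take D = ⊥
      have hXsmall : SmallSub R X := by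
        intro Y hY
        have hAY : A ≤ Y := by
          rintro ⟨q, c⟩ hq
          have hc : c = 0 := (memA _).mp hq
          subst hc
          obtain ⟨q', hq'⟩ := divPowAux (kr_div hϖ) n q
          have hmem : ((q', 0) : Q × Bq) ∈ X ⊔ Y := hY ▸ Submodule.mem_top
          obtain ⟨⟨sa, sb⟩, hs, y, hy, hsy⟩ := Submodule.mem_sup.mp hmem
          have hs2 : sb = 0 := (memA _).mp (hXA hs)
          subst hs2
          have hs1 : ϖ ^ n • ((sa, (0 : Bq)) : Q × Bq) = 0 := by
            have h0 : ϖ ^ n • sa = 0 := hnmem sa hs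
            rw [Prod.smul_mk, h0, smul_zero]
            rfl
          have : ((q, 0) : Q × Bq) = ϖ ^ n • y := by
            have h3 : ((q, 0) : Q × Bq) = ϖ ^ n • ((q', 0) : Q × Bq) := by
              rw [Prod.smul_mk, hq', smul_zero]
            rw [h3, ← hsy, smul_add, hs1, zero_add]
          rw [this]
          exact Y.smul_mem _ hy
        have hXY : X ≤ Y := le_trans hXA hAY
        rw [← hY, sup_eq_right.mpr hXY]
      refine ⟨⊥, ⟨⊤, isCompl_bot_top⟩, ?_, ?_⟩
      · rw [sup_bot_eq]
        exact smallSub_map _ (Submodule.mkQ_surjective _) hXsmall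
      · rw [sup_bot_eq]
        have hmap : X.map X.mkQ = ⊥ := by
          rw [eq_bot_iff]
          rintro z ⟨x, hx, rfl⟩
          rw [Submodule.mem_bot, Submodule.mkQ_apply, Submodule.Quotient.mk_eq_zero]
          exact hx
        rw [hmap]
        exact smallSub_bot
    · -- generic case: take D = B
      obtain ⟨⟨a, c⟩, haX, haA⟩ := SetLike.not_le_iff_exists.mp hXA
      have hc : c ≠ 0 := fun h => haA ((memA _).mpr h)
      have hcover : ∀ c' : Bq, ∃ qc : Q, (qc, c') ∈ X := by
        intro c'
        obtain ⟨r, hr⟩ := hspan c hc c'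
        refine ⟨r • a, ?_⟩
        have := X.smul_mem r haX
        rwa [Prod.smul_mk, hr] at this
      -- a is annihilated by ϖ ^ (n + 1)
      have ha1 : ϖ ^ (n + 1) • a = 0 := by
        have h0 : ϖ • ((a, c) : Q × Bq) = (ϖ • a, 0) := by
          rw [Prod.smul_mk, hBqkill]
        have h1 : ((ϖ • a, 0) : Q × Bq) ∈ X := h0 ▸ X.smul_mem ϖ haX
        have h2 : ϖ ^ n • (ϖ • a) = 0 := hnmem _ h1
        rw [pow_succ, mul_smul, h2]
      -- X ⊔ B is annihilated by ϖ ^ (n + 1)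
      have hbXB : ∀ p ∈ X ⊔ B, ϖ ^ (n + 1) • p = 0 := by
        have hbX : ∀ p ∈ X, ϖ ^ (n + 1) • p = 0 := by
          rintro ⟨q, c'⟩ hp
          obtain ⟨r, hr⟩ := hspan c hc c'
          have hsub : ((q, c') : Q × Bq) - r • (a, c) ∈ X :=
            X.sub_mem hp (X.smul_mem r haX)
          have hform : ((q, c') : Q × Bq) - r • (a, c) = (q - r • a, 0) := by
            rw [Prod.smul_mk, hr]
            ext <;> simp
          rw [hform] at hsub
          have h2 : ϖ ^ n • (q - r • a) = 0 := hnmem _ hsub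
          have h3 : ϖ ^ (n + 1) • q = 0 := by
            have hq : q = (q - r • a) + r • a := by abel
            have e1 : ϖ ^ (n + 1) • (q - r • a) = 0 := by
              rw [pow_succ', mul_smul, h2, smul_zero]
            have e2 : ϖ ^ (n + 1) • (r • a) = 0 := by
              rw [smul_comm, ha1, smul_zero]
            rw [hq, smul_add, e1, e2, add_zero]
          have h4 : ϖ ^ (n + 1) • c' = 0 := by
            rw [pow_succ, mul_smul, hBqkill, smul_zero]
          rw [Prod.smul_mk, h3, h4]
          rfl
        have hbB : ∀ p ∈ B, ϖ ^ (n + 1) • p = 0 := by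
          rintro ⟨q, c'⟩ hp
          have hq : q = 0 := (memB _).mp hp
          subst hq
          have h4 : ϖ ^ (n + 1) • c' = 0 := by
            rw [pow_succ, mul_smul, hBqkill, smul_zero]
          rw [Prod.smul_mk, smul_zero, h4]
          rfl
        intro p hp
        obtain ⟨x, hx, b, hb, rfl⟩ := Submodule.mem_sup.mp hp
        rw [smul_add, hbX x hx, hbB b hb, zero_add]
      have hBdivq : ∀ t : (Q × Bq) ⧸ B, ∃ t', ϖ • t' = t := by
        apply hquotdiv
        intro c'
        exact ⟨0, (memB _).mpr rfl⟩
      have hXdivq : ∀ t : (Q × Bq) ⧸ X, ∃ t', ϖ • t' = t := hquotdiv X hcover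
      refine ⟨B, ⟨A, by rw [hA, hB]; exact LinearMap.isCompl_range_inl_inr.symm⟩, ?_, ?_⟩
      · apply smallSub_of_div_bounded ϖ (n + 1) hBdivq
        rintro z ⟨p, hp, rfl⟩
        rw [← map_smul, hbXB p hp, map_zero]
      · apply smallSub_of_div_bounded ϖ (n + 1) hXdivq
        rintro z ⟨p, hp, rfl⟩
        rw [← map_smul, hbXB p hp, map_zero]
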